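/- arXiv:2503.00849 — 2 statements merged into one kernel-verified Lean document; each statement's English description precedes it below -/
import Mathlib

section
/- Let S be a nonempty finite type, G : S × S → ℝ a matrix with nonnegative off-diagonal entries, ψ : S → ℝ strictly positive, t > 0, m_s := exp(sG)ψ, and for 0 ≤ r ≤ s ≤ t let P_{r,s}f(x) := (exp((s−r)G)(m_{t−s}·f))(x)/m_{t−r}(x). Define A_s f(x) := (G(m_{t−s}·f)(x) − (Gm_{t−s})(x)·f(x)) / m_{t−s}(x). Then for every s ∈ [0,t), every f : S → ℝ and every x ∈ S, the right derivative at h = 0 of h ↦ P_{s,s+h}f(x) exists and equals A_s f(x); that is, lim_{h→0⁺} (P_{s,s+h}f(x) − f(x))/h = A_s f(x). -/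
open Matrix NormedSpace

lemma exp_mulVec_pos' {S : Type*} [Fintype S] [DecidableEq S]
    (G : Matrix S S ℝ) (hG : ∀ x y : S, x ≠ y → 0 ≤ G x y)
    (ψ : S → ℝ) (hψ : ∀ x : S, 0 < ψ x) {u : ℝ} (hu : 0 ≤ u) (x : S) :
    0 < (exp (u • G)).mulVec ψ x := by
  classical
  letI : NormedRing (Matrix S S ℝ) := Matrix.linftyOpNormedRing
  letI : NormedAlgebra ℝ (Matrix S S ℝ) := Matrix.linftyOpNormedAlgebra
  set c : ℝ := ∑ y, |G y y| with hc
  set B : Matrix S S ℝ := G + c • (1 : Matrix S S ℝ) with hBdef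
  have hB : ∀ a b : S, 0 ≤ B a b := by
    intro a b
    by_cases hab : a = b
    · subst hab
      have h1 : |G a a| ≤ c :=
        Finset.single_le_sum (f := fun y => |G y y|) (fun _ _ => abs_nonneg _)
          (Finset.mem_univ a)
      have h2 := neg_abs_le (G a a)
      simp only [hBdef, Matrix.add_apply, Matrix.smul_apply, Matrix.one_apply_eq, smul_eq_mul,
        mul_one]
      linarith
    · simp only [hBdef, Matrix.add_apply, Matrix.smul_apply, Matrix.one_apply_ne hab,
        smul_eq_mul, mul_zero, add_zero]
      exact hG a b hab
  have hBpow : ∀ (n : ℕ) (a b : S), 0 ≤ (B ^ n) a b := by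
    intro n
    induction n with
    | zero => intro a b; rw [pow_zero]; by_cases hab : a = b <;>
        simp [Matrix.one_apply, hab]
    | succ n ih =>
      intro a b
      rw [pow_succ, Matrix.mul_apply]
      exact Finset.sum_nonneg fun y _ => mul_nonneg (ih a y) (hB y b)
  let L : Matrix S S ℝ →L[ℝ] ℝ := LinearMap.toContinuousLinearMap
    { toFun := fun M : Matrix S S ℝ => M.mulVec ψ x
      map_add' := fun M N => by simp [Matrix.add_mulVec]
      map_smul' := fun r M => by simp [Matrix.smul_mulVec] }
  have hLdef : ∀ M : Matrix S S ℝ, L M = M.mulVec ψ x := fun _ => rfl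
  have hsum : Summable fun n : ℕ => ((n.factorial : ℝ))⁻¹ • (u • B) ^ n :=
    expSeries_summable' (𝕂 := ℝ) (u • B)
  have hLB : 0 < L (exp (u • B)) := by
    rw [exp_eq_tsum (𝕂 := ℝ), L.map_tsum hsum]
    refine Summable.tsum_pos (hsum.map L L.continuous) ?_ 0 ?_
    · intro n
      rw [hLdef]
      have : ((n.factorial : ℝ))⁻¹ • (u • B) ^ n = ((n.factorial : ℝ))⁻¹ • (u ^ n • B ^ n) := by
        rw [smul_pow]
      rw [this, Matrix.smul_mulVec, Matrix.smul_mulVec]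
      have : (0:ℝ) ≤ (B ^ n).mulVec ψ x :=
        Finset.sum_nonneg fun y _ => mul_nonneg (hBpow n x y) (hψ y).le
      simp only [Pi.smul_apply, smul_eq_mul]
      positivity
    · simp only [Function.comp_apply, pow_zero, Nat.factorial_zero, Nat.cast_one, inv_one,
        one_smul, hLdef, Matrix.one_mulVec]
      exact hψ x
  have hcomm : Commute (u • B) ((-(u * c)) • (1 : Matrix S S ℝ)) :=
    (Commute.one_right (u • B)).smul_right _
  have hsplit : u • G = u • B + (-(u * c)) • (1 : Matrix S S ℝ) := by
    rw [hBdef]; module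
  have hexp1 : exp ((-(u * c)) • (1 : Matrix S S ℝ))
      = Real.exp (-(u * c)) • (1 : Matrix S S ℝ) := by
    rw [← Algebra.algebraMap_eq_smul_one]
    erw [← algebraMap_exp_comm]
    rw [Real.exp_eq_exp_ℝ, Algebra.algebraMap_eq_smul_one]
  have hexp : exp (u • G) = Real.exp (-(u * c)) • exp (u • B) := by
    rw [hsplit, Matrix.exp_add_of_commute _ _ hcomm, hexp1, mul_smul_comm, mul_one]
  rw [hexp, Matrix.smul_mulVec, Pi.smul_apply, smul_eq_mul]
  exact mul_pos (Real.exp_pos _) (by rw [← hLdef]; exact hLB)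


/-- The right derivative at `h = 0` of `h ↦ P_{s,s+h} f (x)` exists and equals
`A_s f (x) = (G (m_{t-s} · f) x − (G m_{t-s}) x · f x) / m_{t-s} x`, where
`m_s = exp (sG) ψ` and `P_{r,s} f (x) = (exp ((s−r)G)(m_{t−s}·f)) x / m_{t−r} x`. -/
theorem inhomogeneous_semigroup_generator
    {S : Type*} [Fintype S] [Nonempty S] [DecidableEq S]
    (G : Matrix S S ℝ) (hG : ∀ x y : S, x ≠ y → 0 ≤ G x y)
    (ψ : S → ℝ) (hψ : ∀ x : S, 0 < ψ x)
    (t : ℝ) (ht : 0 < t)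
    (m : ℝ → S → ℝ) (hm : ∀ s : ℝ, m s = (NormedSpace.exp (s • G)).mulVec ψ)
    (P : ℝ → ℝ → (S → ℝ) → S → ℝ)
    (hP : ∀ (r s : ℝ) (f : S → ℝ) (x : S),
      P r s f x =
        (NormedSpace.exp ((s - r) • G)).mulVec (fun y => m (t - s) y * f y) x
          / m (t - r) x)
    (A : ℝ → (S → ℝ) → S → ℝ)
    (hA : ∀ (s : ℝ) (f : S → ℝ) (x : S),
      A s f x =
        (G.mulVec (fun y => m (t - s) y * f y) x - G.mulVec (m (t - s)) x * f x)
          / m (t - s) x) :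
    ∀ s : ℝ, 0 ≤ s → s < t → ∀ (f : S → ℝ) (x : S),
      Filter.Tendsto (fun h : ℝ => (P s (s + h) f x - f x) / h)
        (nhdsWithin 0 (Set.Ioi 0)) (nhds (A s f x)) := by
  intro s hs hst f x
  classical
  letI : NormedRing (Matrix S S ℝ) := Matrix.linftyOpNormedRing
  letI : NormedAlgebra ℝ (Matrix S S ℝ) := Matrix.linftyOpNormedAlgebra
  have hts : (0:ℝ) ≤ t - s := by linarith
  have hpos : 0 < m (t - s) x := by rw [hm]; exact exp_mulVec_pos' G hG ψ hψ hts x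
  set N : ℝ → ℝ :=
    fun h => (exp (h • G)).mulVec (fun y => m (t - s - h) y * f y) x with hNdef
  set D : ℝ :=
    G.mulVec (fun y => m (t - s) y * f y) x - G.mulVec (m (t - s)) x * f x with hDdef
  -- derivative of each entry of the exponential
  have hentry : ∀ y : S, HasDerivAt (fun h : ℝ => (exp (h • G)) x y) (G x y) 0 := by
    intro y
    let E : Matrix S S ℝ →L[ℝ] ℝ := LinearMap.toContinuousLinearMap
      { toFun := fun M : Matrix S S ℝ => M x y
        map_add' := fun _ _ => rfl
        map_smul' := fun _ _ => rfl }
    have hExp : HasDerivAt (fun u : ℝ => exp (u • G)) (G * exp ((0:ℝ) • G)) 0 :=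
      hasDerivAt_exp_smul_const' G (0:ℝ)
    have h3 := E.hasFDerivAt.comp_hasDerivAt 0 hExp
    have hval : E (G * exp ((0:ℝ) • G)) = G x y := by
      show (G * exp ((0:ℝ) • G)) x y = G x y
      rw [zero_smul, exp_zero, mul_one]
    rw [← hval]
    exact h3
  -- derivative of h ↦ m (t - s - h) y
  have hmy : ∀ y : S,
      HasDerivAt (fun h : ℝ => m (t - s - h) y) (-(G.mulVec (m (t - s)) y)) 0 := by
    intro y
    let E : Matrix S S ℝ →L[ℝ] ℝ := LinearMap.toContinuousLinearMap
      { toFun := fun M : Matrix S S ℝ => M.mulVec ψ y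
        map_add' := fun M N' => by simp [Matrix.add_mulVec]
        map_smul' := fun r M => by simp [Matrix.smul_mulVec] }
    have hinner : HasDerivAt (fun h : ℝ => t - s - h) (-1) 0 := by
      simpa using (hasDerivAt_id (0:ℝ)).const_sub (t - s)
    have houter : HasDerivAt (fun u : ℝ => exp (u • G))
        (G * exp ((t - s - 0) • G)) (t - s - 0) := hasDerivAt_exp_smul_const' G (t - s - 0)
    have hcomp := HasDerivAt.scomp 0 houter hinner
    have hfull := E.hasFDerivAt.comp_hasDerivAt 0 hcomp
    have heq : (fun h : ℝ => E (exp ((t - s - h) • G))) = fun h : ℝ => m (t - s - h) y := by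
      funext h
      rw [hm]
      rfl
    have hval : E ((-1 : ℝ) • (G * exp ((t - s - 0) • G))) = -(G.mulVec (m (t - s)) y) := by
      show (((-1 : ℝ) • (G * exp ((t - s - 0) • G))).mulVec ψ) y = -(G.mulVec (m (t - s)) y)
      rw [sub_zero, hm]
      simp [Matrix.smul_mulVec, Matrix.mulVec_mulVec, Matrix.neg_mulVec]
    rw [← heq, ← hval]
    exact hfull
  -- derivative of N
  have hNsum : N = fun h : ℝ => ∑ y, (exp (h • G)) x y * (m (t - s - h) y * f y) := by
    funext h
    simp [hNdef, Matrix.mulVec, dotProduct]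
  have hderiv : HasDerivAt N D 0 := by
    rw [hNsum]
    have hsum : HasDerivAt
        (fun h : ℝ => ∑ y, (exp (h • G)) x y * (m (t - s - h) y * f y))
        (∑ y, (G x y * (m (t - s - 0) y * f y) +
          (exp ((0:ℝ) • G)) x y * (-(G.mulVec (m (t - s)) y) * f y))) 0 :=
      HasDerivAt.fun_sum fun y _ => (hentry y).mul ((hmy y).mul_const (f y))
    convert hsum using 1
    rw [hDdef]
    simp only [sub_zero, zero_smul, exp_zero, Matrix.one_apply, ite_mul, one_mul, zero_mul,
      Finset.sum_add_distrib, Finset.sum_ite_eq, Finset.mem_univ, if_true,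
      Matrix.mulVec, dotProduct]
    ring
  -- pass to slope along Ioi
  have hslope : Filter.Tendsto (fun h : ℝ => (N h - N 0) / h)
      (nhdsWithin 0 (Set.Ioi 0)) (nhds D) := by
    have h1 := hasDerivAt_iff_tendsto_slope.mp hderiv
    have h2 : Set.Ioi (0:ℝ) ⊆ {(0:ℝ)}ᶜ := fun h hh => ne_of_gt hh
    have h3 := h1.mono_left (nhdsWithin_mono 0 h2)
    refine h3.congr fun h => ?_
    simp [slope_def_field]
  have hN0 : N 0 = m (t - s) x * f x := by
    simp [hNdef, zero_smul, exp_zero, Matrix.one_mulVec, sub_zero]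
  have key : (fun h : ℝ => (P s (s + h) f x - f x) / h)
      = fun h : ℝ => ((N h - N 0) / h) / m (t - s) x := by
    funext h
    rw [hP]
    have h1 : s + h - s = h := by ring
    have h2 : t - (s + h) = t - s - h := by ring
    rw [h1, h2, hN0]
    have : (exp (h • G)).mulVec (fun y => m (t - s - h) y * f y) x = N h := rfl
    rw [this]
    field_simp
  rw [key, hA]
  have : (G.mulVec (fun y => m (t - s) y * f y) x - G.mulVec (m (t - s)) x * f x)
      / m (t - s) x = D / m (t - s) x := by rw [hDdef]
  rw [this]
  exact hslope.div_const _
end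

section
/- Let S be a nonempty finite type, t > 0, Q : [0,t] → (S × S → ℝ) a continuous family of matrices with nonnegative off-diagonal entries, and λ : [0,t] → (S → ℝ) continuous. Suppose h : [0,t] → (S → ℝ) is C¹ with h_s(x) > 0 for all s ∈ [0,t] and x ∈ S, and satisfies the backward Feynman–Kac equation d/ds h_s(x) = −(Q_s h_s)(x) − λ_s(x) h_s(x). Suppose (V_{r,s})_{0 ≤ r ≤ s ≤ t} is a family of linear operators on ℝ^S with V_{r,r} = id such that for every f : S → ℝ and x ∈ S, s ↦ V_{r,s}f(x) is differentiable with d/ds V_{r,s}f(x) = V_{r,s}((Q_s + diag λ_s)f)(x). Define U_{r,s}f(x) := V_{r,s}(h_s·f)(x)/h_r(x), and A_s f(x) := (Q_s(h_s·f)(x) − (Q_s h_s)(x) f(x))/h_s(x). Then: (i) U_{r,r} = id; (ii) U is conservative, U_{r,s}𝟙 = 𝟙 for all r ≤ s ≤ t; and (iii) for every f and x, s ↦ U_{r,s}f(x) is differentiable with d/ds U_{r,s}f(x) = U_{r,s}(A_s f)(x). -/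
open Matrix

private lemma expand_lin {S : Type*} [Fintype S] [DecidableEq S]
    (W : (S → ℝ) →ₗ[ℝ] (S → ℝ)) (k : S → ℝ) (x : S) :
    W k x = ∑ y, k y * W (Pi.single y 1) x := by
  conv_lhs => rw [← Finset.univ_sum_single k]
  rw [map_sum]
  simp only [Finset.sum_apply]
  refine Finset.sum_congr rfl fun y _ => ?_
  have h1 : Pi.single y (k y) = k y • (Pi.single y 1 : S → ℝ) := by
    funext z
    by_cases hz : z = y <;> simp [hz, Pi.single_apply, Pi.smul_apply, smul_eq_mul]
  rw [h1, _root_.map_smul]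
  simp [smul_eq_mul]

/-- The operator `f ↦ Q.mulVec f + lam * f` as a linear map. -/
private def opB {S : Type*} [Fintype S] (Q : Matrix S S ℝ) (lam : S → ℝ) :
    (S → ℝ) →ₗ[ℝ] (S → ℝ) where
  toFun f := fun y => Q.mulVec f y + lam y * f y
  map_add' f g := by
    funext y
    simp [Matrix.mulVec_add]
    ring
  map_smul' c f := by
    funext y
    simp [Matrix.mulVec_smul, smul_eq_mul]
    ring

/-- Key differentiation lemma: derivative of `s ↦ V r s (g s) x` for time-dependent `g`. -/
private lemma key_deriv {S : Type*} [Fintype S] [DecidableEq S]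
    (t : ℝ)
    (Q : ℝ → Matrix S S ℝ) (lam : ℝ → S → ℝ)
    (V : ℝ → ℝ → (S → ℝ) →ₗ[ℝ] (S → ℝ))
    (r : ℝ) (hr : r ∈ Set.Icc (0 : ℝ) t)
    (hVode : ∀ (f : S → ℝ) (x : S), ∀ s ∈ Set.Icc r t,
      HasDerivWithinAt (fun u => V r u f x)
        (V r s (fun y => (Q s).mulVec f y + lam s y * f y) x) (Set.Icc r t) s)
    (g g' : ℝ → S → ℝ)
    (hg : ∀ y : S, ∀ s ∈ Set.Icc r t,
      HasDerivWithinAt (fun u => g u y) (g' s y) (Set.Icc r t) s)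
    (x : S) (s : ℝ) (hs : s ∈ Set.Icc r t) :
    HasDerivWithinAt (fun u => V r u (g u) x)
      (V r s (fun y => (Q s).mulVec (g s) y + lam s y * g s y) x + V r s (g' s) x)
      (Set.Icc r t) s := by
  have hfun : (fun u => V r u (g u) x)
      = fun u => ∑ y, g u y * V r u (Pi.single y 1) x := by
    funext u
    exact expand_lin (V r u) (g u) x
  rw [hfun]
  have hterm : ∀ y : S,
      HasDerivWithinAt (fun u => g u y * V r u (Pi.single y 1) x)
        (g' s y * V r s (Pi.single y 1) x
          + g s y * V r s ((opB (Q s) (lam s)) (Pi.single y 1)) x)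
        (Set.Icc r t) s := by
    intro y
    exact (hg y s hs).mul (hVode (Pi.single y 1) x s hs)
  have hsum := HasDerivWithinAt.sum (u := (Finset.univ : Finset S))
    (fun y (_ : y ∈ Finset.univ) => hterm y)
  have heq : (∑ y, (g' s y * V r s (Pi.single y 1) x
        + g s y * V r s ((opB (Q s) (lam s)) (Pi.single y 1)) x))
      = V r s (fun y => (Q s).mulVec (g s) y + lam s y * g s y) x + V r s (g' s) x := by
    rw [Finset.sum_add_distrib]
    rw [add_comm]
    congr 1
    · exact (calc V r s (fun y => (Q s).mulVec (g s) y + lam s y * g s y) x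
          = ((V r s).comp (opB (Q s) (lam s))) (g s) x := rfl
        _ = ∑ y, g s y * ((V r s).comp (opB (Q s) (lam s))) (Pi.single y 1) x :=
            expand_lin _ _ x
        _ = ∑ y, g s y * V r s ((opB (Q s) (lam s)) (Pi.single y 1)) x := rfl).symm
    · exact (expand_lin (V r s) (g' s) x).symm
  rw [← heq]
  rw [Finset.sum_fn] at hsum
  exact hsum

/-- `h`-transform of a Feynman–Kac evolution on a finite state space: if `h` is a
positive `C¹` solution of the backward Feynman–Kac equation
`d/ds h_s = −Q_s h_s − λ_s h_s` and `(V_{r,s})` is a family of linear operators with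
`V_{r,r} = id` solving `d/ds V_{r,s} f = V_{r,s}((Q_s + diag λ_s) f)`, then
`U_{r,s} f := V_{r,s}(h_s · f)/h_r` satisfies `U_{r,r} = id`, is conservative
(`U_{r,s} 1 = 1`), and solves `d/ds U_{r,s} f = U_{r,s}(A_s f)` with
`A_s f = (Q_s(h_s f) − (Q_s h_s) f)/h_s`. -/
theorem h_transform_of_feynman_kac_evolution
    {S : Type*} [Fintype S] [Nonempty S] [DecidableEq S]
    (t : ℝ) (ht : 0 < t)
    (Q : ℝ → Matrix S S ℝ)
    (hQcont : ∀ x y : S, ContinuousOn (fun s => Q s x y) (Set.Icc 0 t))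
    (hQpos : ∀ s ∈ Set.Icc (0 : ℝ) t, ∀ x y : S, x ≠ y → 0 ≤ Q s x y)
    (lam : ℝ → S → ℝ)
    (hlamcont : ∀ x : S, ContinuousOn (fun s => lam s x) (Set.Icc 0 t))
    (h : ℝ → S → ℝ)
    (hpos : ∀ s ∈ Set.Icc (0 : ℝ) t, ∀ x : S, 0 < h s x)
    (hderiv : ∀ x : S, ∀ s ∈ Set.Icc (0 : ℝ) t,
      HasDerivWithinAt (fun u => h u x)
        (-(Q s).mulVec (h s) x - lam s x * h s x) (Set.Icc (0 : ℝ) t) s)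
    (V : ℝ → ℝ → (S → ℝ) →ₗ[ℝ] (S → ℝ))
    (hVid : ∀ r ∈ Set.Icc (0 : ℝ) t, V r r = LinearMap.id)
    (hVode : ∀ r ∈ Set.Icc (0 : ℝ) t, ∀ (f : S → ℝ) (x : S), ∀ s ∈ Set.Icc r t,
      HasDerivWithinAt (fun u => V r u f x)
        (V r s (fun y => (Q s).mulVec f y + lam s y * f y) x) (Set.Icc r t) s)
    (U : ℝ → ℝ → (S → ℝ) → S → ℝ)
    (hU : ∀ (r s : ℝ) (f : S → ℝ) (x : S),
      U r s f x = V r s (fun y => h s y * f y) x / h r x)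
    (A : ℝ → (S → ℝ) → S → ℝ)
    (hA : ∀ (s : ℝ) (f : S → ℝ) (x : S),
      A s f x = ((Q s).mulVec (fun y => h s y * f y) x
        - (Q s).mulVec (h s) x * f x) / h s x) :
    -- (i) `U_{r,r} = id`
    (∀ r ∈ Set.Icc (0 : ℝ) t, ∀ (f : S → ℝ) (x : S), U r r f x = f x) ∧
    -- (ii) conservativity
    (∀ r s : ℝ, 0 ≤ r → r ≤ s → s ≤ t → ∀ x : S,
      U r s (fun _ => (1 : ℝ)) x = 1) ∧
    -- (iii) evolution equation `d/ds U_{r,s} f = U_{r,s}(A_s f)`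
    (∀ r ∈ Set.Icc (0 : ℝ) t, ∀ (f : S → ℝ) (x : S), ∀ s ∈ Set.Icc r t,
      HasDerivWithinAt (fun u => U r u f x) (U r s (A s f) x) (Set.Icc r t) s) := by
  have part1 : ∀ r ∈ Set.Icc (0 : ℝ) t, ∀ (f : S → ℝ) (x : S), U r r f x = f x := by
    intro r hr f x
    rw [hU, hVid r hr]
    simp only [LinearMap.id_apply]
    exact mul_div_cancel_left₀ (f x) (ne_of_gt (hpos r hr x))
  refine ⟨part1, ?_, ?_⟩
  · -- (ii) conservativity
    intro r s hr0 hrs hst x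
    have hrt : r ∈ Set.Icc (0 : ℝ) t := ⟨hr0, le_trans hrs hst⟩
    have hsub : Set.Icc r t ⊆ Set.Icc (0 : ℝ) t := Set.Icc_subset_Icc hr0 le_rfl
    have hadd : ∀ (s' : ℝ) (a b : S → ℝ),
        V r s' a x + V r s' b x = V r s' (fun y => a y + b y) x := by
      intro s' a b
      rw [show (fun y => a y + b y) = a + b from rfl, map_add]
      rfl
    have hkey : ∀ s' ∈ Set.Icc r t,
        HasDerivWithinAt (fun u => V r u (h u) x) 0 (Set.Icc r t) s' := by
      intro s' hs'
      have hk := key_deriv t Q lam V r hrt (hVode r hrt) h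
        (fun u y => -(Q u).mulVec (h u) y - lam u y * h u y)
        (fun y s'' hs'' => (hderiv y s'' (hsub hs'')).mono hsub) x s' hs'
      have hz : V r s' (fun y => (Q s').mulVec (h s') y + lam s' y * h s' y) x
          + V r s' ((fun u y => -(Q u).mulVec (h u) y - lam u y * h u y) s') x = 0 := by
        rw [hadd]
        have : (fun y => ((Q s').mulVec (h s') y + lam s' y * h s' y)
            + ((fun u y => -(Q u).mulVec (h u) y - lam u y * h u y) s' y))
            = (0 : S → ℝ) := by
          funext y; simp only [Pi.zero_apply]; ring
        rw [this, map_zero]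
        rfl
      rw [hz] at hk
      exact hk
    have hdiff : DifferentiableOn ℝ (fun u => V r u (h u) x) (Set.Icc r t) :=
      fun s' hs' => (hkey s' hs').differentiableWithinAt
    have hconst := constant_of_derivWithin_zero hdiff (fun s' hs' => by
      have hrt' : r < t := lt_of_le_of_lt hs'.1 hs'.2
      exact (hkey s' (Set.Ico_subset_Icc_self hs')).derivWithin
        ((uniqueDiffOn_Icc hrt') s' (Set.Ico_subset_Icc_self hs')))
    have hcs : V r s (h s) x = V r r (h r) x := by
      have h1 := hconst s ⟨hrs, hst⟩
      have h2 := hconst r ⟨le_rfl, le_trans hrs hst⟩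
      rw [h1, h2]
    rw [hU]
    simp only [mul_one]
    rw [hcs, hVid r hrt]
    simp only [LinearMap.id_apply]
    exact div_self (ne_of_gt (hpos r hrt x))
  · -- (iii) evolution equation
    intro r hrt f x s hs
    have hsub : Set.Icc r t ⊆ Set.Icc (0 : ℝ) t := Set.Icc_subset_Icc hrt.1 le_rfl
    have hs0t : s ∈ Set.Icc (0 : ℝ) t := hsub hs
    have hkey := key_deriv t Q lam V r hrt (hVode r hrt)
      (fun u y => h u y * f y)
      (fun u y => (-(Q u).mulVec (h u) y - lam u y * h u y) * f y)
      (fun y s'' hs'' => ((hderiv y s'' (hsub hs'')).mono hsub).mul_const (f y))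
      x s hs
    have heq : (fun u => U r u f x)
        = fun u => V r u (fun y => h u y * f y) x / h r x := by
      funext u; exact hU r u f x
    rw [heq]
    have hderU := hkey.div_const (h r x)
    have harg : V r s (fun y => h s y * A s f y) x
        = V r s (fun y => (Q s).mulVec ((fun u y => h u y * f y) s) y
            + lam s y * (fun u y => h u y * f y) s y) x
          + V r s ((fun u y => (-(Q u).mulVec (h u) y - lam u y * h u y) * f y) s) x := by
      rw [show V r s (fun y => (Q s).mulVec ((fun u y => h u y * f y) s) y
            + lam s y * (fun u y => h u y * f y) s y) x
          + V r s ((fun u y => (-(Q u).mulVec (h u) y - lam u y * h u y) * f y) s) x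
        = V r s ((fun y => (Q s).mulVec ((fun u y => h u y * f y) s) y
            + lam s y * (fun u y => h u y * f y) s y)
            + fun y => (-(Q s).mulVec (h s) y - lam s y * h s y) * f y) x
        from by rw [map_add]; rfl]
      have harg2 : (fun y => h s y * A s f y)
          = ((fun y => (Q s).mulVec ((fun u y => h u y * f y) s) y
            + lam s y * (fun u y => h u y * f y) s y)
            + fun y => (-(Q s).mulVec (h s) y - lam s y * h s y) * f y) := by
        funext y
        simp only [Pi.add_apply]
        rw [hA]
        have hy : h s y ≠ 0 := ne_of_gt (hpos s hs0t y)
        rw [mul_comm, div_mul_cancel₀ _ hy]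
        ring
      rw [harg2]
    have : U r s (A s f) x
        = (V r s (fun y => (Q s).mulVec ((fun u y => h u y * f y) s) y
            + lam s y * (fun u y => h u y * f y) s y) x
          + V r s ((fun u y => (-(Q u).mulVec (h u) y - lam u y * h u y) * f y) s) x)
          / h r x := by
      rw [hU, harg]
    rw [this]
    exact hderU
end
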